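/- Let X = (X, d_X, μ_X) be an mm-space that is a CD*(K,N) space for some K > 0 and N < 0. Then for all κ₀, κ₁ > 0 with κ₀ + κ₁ < 1 and all Borel sets A₀, A₁ ⊆ X with μ_X(A₀) ≥ κ₀ and μ_X(A₁) ≥ κ₁, one has dist(A₀, A₁) ≤ 2·√(−N/K)·arcosh((κ₀^{1/N} + κ₁^{1/N})/2), where dist(A₀,A₁) := inf{d_X(x,y) : x ∈ A₀, y ∈ A₁} and arcosh(x) = log(x + √(x²−1)) for x ≥ 1. -/

import Mathlib

/-- A bundled mm-space: a complete separable metric space with a Borel probability measure. -/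
structure MMSpace where
  X : Type
  [metric : MetricSpace X]
  [cpl : CompleteSpace X]
  [sep : TopologicalSpace.SeparableSpace X]
  [mble : MeasurableSpace X]
  [borel : BorelSpace X]
  μ : MeasureTheory.Measure X
  [prob : MeasureTheory.IsProbabilityMeasure μ]

attribute [instance] MMSpace.metric MMSpace.cpl MMSpace.sep MMSpace.mble MMSpace.borel MMSpace.prob

open MeasureTheory ENNReal Filter Topology Set

noncomputable section

/-- A coupling of two measures on `X` is a measure on `X × X` whose marginals are the
given measures. -/
def IsCoupling {X : Type*} [MeasurableSpace X] (π : Measure (X × X)) (μ ν : Measure X) : Prop :=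
  π.map Prod.fst = μ ∧ π.map Prod.snd = ν

/-- A measure has finite second moment if `∫ d(x,x₀)² dμ < ∞` for some base point. -/
def HasFiniteSecondMoment {X : Type*} [PseudoMetricSpace X] [MeasurableSpace X]
    (μ : Measure X) : Prop :=
  ∃ x₀ : X, ∫⁻ x, ENNReal.ofReal (dist x x₀) ^ 2 ∂μ < ∞

/-- The square-root of the quadratic transport cost of a coupling. -/
def cost2 {X : Type*} [PseudoMetricSpace X] [MeasurableSpace X] (π : Measure (X × X)) : ℝ≥0∞ :=
  (∫⁻ p, ENNReal.ofReal (dist p.1 p.2) ^ 2 ∂π) ^ (1 / 2 : ℝ)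

/-- The 2-Wasserstein distance (valued in `[0,∞]`). -/
def W2 {X : Type*} [PseudoMetricSpace X] [MeasurableSpace X] (μ ν : Measure X) : ℝ≥0∞ :=
  ⨅ (π : Measure (X × X)) (_ : IsCoupling π μ ν), cost2 π

/-- A coupling is optimal if it attains the 2-Wasserstein distance. -/
def IsOptimalCoupling {X : Type*} [PseudoMetricSpace X] [MeasurableSpace X]
    (π : Measure (X × X)) (μ ν : Measure X) : Prop :=
  IsCoupling π μ ν ∧ cost2 π = W2 μ ν

open Classical in
/-- The Rényi entropy `S_{N',μ}(ν) = ∫ ρ^{1-1/N'} dμ` if `ν = ρμ ≪ μ`, and `∞` otherwise. -/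
def renyiEntropy {X : Type*} [MeasurableSpace X] (N' : ℝ) (μ ν : Measure X) : ℝ≥0∞ :=
  if ν ≪ μ then ∫⁻ x, (ν.rnDeriv μ x) ^ (1 - 1 / N') ∂μ else ∞

/-- Weak convergence of a sequence of measures: convergence of integrals of all bounded
continuous functions. -/
def WeakConv {X : Type*} [TopologicalSpace X] [MeasurableSpace X]
    (μs : ℕ → Measure X) (μ : Measure X) : Prop :=
  ∀ f : BoundedContinuousFunction X ℝ,
    Tendsto (fun n => ∫ x, f x ∂(μs n)) atTop (𝓝 (∫ x, f x ∂μ))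

/-- Tightness of a sequence of measures. -/
def IsTightSeq {X : Type*} [TopologicalSpace X] [MeasurableSpace X]
    (μs : ℕ → Measure X) : Prop :=
  ∀ ε : ℝ, 0 < ε → ∃ K : Set X, IsCompact K ∧ ∀ n, μs n Kᶜ < ENNReal.ofReal ε

/-- The function `s_κ`, with the convention `s_κ(0) = 1`. -/
def sKappa (κ θ : ℝ) : ℝ :=
  if θ = 0 then 1
  else if 0 < κ then Real.sin (Real.sqrt κ * θ) / (Real.sqrt κ * θ)
  else if κ < 0 then Real.sinh (Real.sqrt (-κ) * θ) / (Real.sqrt (-κ) * θ)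
  else 1

/-- `ω_κ = π/√κ` for `κ > 0` and `∞` otherwise. -/
def omegaKappa (κ : ℝ) : ℝ≥0∞ :=
  if 0 < κ then ENNReal.ofReal (Real.pi / Real.sqrt κ) else ∞

/-- The coefficient `τ_{K,N}^{(t)}(θ)`, valued in `[0,∞]`. -/
def tauCoeff (K N t θ : ℝ) : ℝ≥0∞ :=
  if ENNReal.ofReal θ < omegaKappa (K / (N - 1)) then
    ENNReal.ofReal (t * (sKappa (K / (N - 1)) (t * θ) / sKappa (K / (N - 1)) θ) ^ (1 - 1 / N))
  else ∞

/-- The coefficient `σ_κ^{(t)}(θ)`, valued in `[0,∞]`. -/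
def sigmaCoeff (κ t θ : ℝ) : ℝ≥0∞ :=
  if ENNReal.ofReal θ < omegaKappa κ then
    ENNReal.ofReal (t * sKappa κ (t * θ) / sKappa κ θ)
  else ∞

/-- The curvature-dimension condition `CD(K,N)` for `N < 0`, for a (probability) measure on a
metric space. -/
def IsCDSpace {X : Type*} [MetricSpace X] [MeasurableSpace X] (K N : ℝ) (μX : Measure X) : Prop :=
  ∀ ν₀ ν₁ : Measure X, IsProbabilityMeasure ν₀ → IsProbabilityMeasure ν₁ →
    ν₀ ≪ μX → ν₁ ≪ μX →
    HasFiniteSecondMoment ν₀ → HasFiniteSecondMoment ν₁ →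
    renyiEntropy N μX ν₀ < ∞ → renyiEntropy N μX ν₁ < ∞ →
    ∃ (νt : ℝ → Measure X) (π : Measure (X × X)),
      νt 0 = ν₀ ∧ νt 1 = ν₁ ∧
      (∀ s ∈ Icc (0:ℝ) 1, ∀ t ∈ Icc (0:ℝ) 1,
        W2 (νt s) (νt t) = ENNReal.ofReal |s - t| * W2 ν₀ ν₁) ∧
      IsOptimalCoupling π ν₀ ν₁ ∧
      (∀ t ∈ Icc (0:ℝ) 1, ∀ N' ∈ Ico N (0:ℝ),
        renyiEntropy N' μX ν₀ < ∞ → renyiEntropy N' μX ν₁ < ∞ →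
        renyiEntropy N' μX (νt t) ≤
          (∫⁻ p, tauCoeff K N' (1 - t) (dist p.1 p.2) * (ν₀.rnDeriv μX p.1) ^ (-(1 / N')) ∂π)
          + ∫⁻ p, tauCoeff K N' t (dist p.1 p.2) * (ν₁.rnDeriv μX p.2) ^ (-(1 / N')) ∂π)

/-- The reduced curvature-dimension condition `CD*(K,N)` for `N < 0`. -/
def IsCDStarSpace {X : Type*} [MetricSpace X] [MeasurableSpace X] (K N : ℝ)
    (μX : Measure X) : Prop :=
  ∀ ν₀ ν₁ : Measure X, IsProbabilityMeasure ν₀ → IsProbabilityMeasure ν₁ →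
    ν₀ ≪ μX → ν₁ ≪ μX →
    HasFiniteSecondMoment ν₀ → HasFiniteSecondMoment ν₁ →
    renyiEntropy N μX ν₀ < ∞ → renyiEntropy N μX ν₁ < ∞ →
    ∃ (νt : ℝ → Measure X) (π : Measure (X × X)),
      νt 0 = ν₀ ∧ νt 1 = ν₁ ∧
      (∀ s ∈ Icc (0:ℝ) 1, ∀ t ∈ Icc (0:ℝ) 1,
        W2 (νt s) (νt t) = ENNReal.ofReal |s - t| * W2 ν₀ ν₁) ∧
      IsOptimalCoupling π ν₀ ν₁ ∧
      (∀ t ∈ Icc (0:ℝ) 1, ∀ N' ∈ Ico N (0:ℝ),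
        renyiEntropy N' μX ν₀ < ∞ → renyiEntropy N' μX ν₁ < ∞ →
        renyiEntropy N' μX (νt t) ≤
          (∫⁻ p, sigmaCoeff (K / N') (1 - t) (dist p.1 p.2)
              * (ν₀.rnDeriv μX p.1) ^ (-(1 / N')) ∂π)
          + ∫⁻ p, sigmaCoeff (K / N') t (dist p.1 p.2)
              * (ν₁.rnDeriv μX p.2) ^ (-(1 / N')) ∂π)

/-- The conditioned (normalized restricted) measure `ν_B`. -/
def condProb {X : Type*} [MeasurableSpace X] (ν : Measure X) (B : Set X) : Measure X :=
  (ν B)⁻¹ • ν.restrict B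

/-- Inverse hyperbolic cosine, `arcosh x = log (x + √(x²-1))`. -/
def acosh (x : ℝ) : ℝ := Real.log (x + Real.sqrt (x ^ 2 - 1))

/-- A parameter of an mm-space: a Borel map `[0,1) → X` pushing the Lebesgue measure to `μ`. -/
def IsParameter (A : MMSpace) (φ : ℝ → A.X) : Prop :=
  Measurable φ ∧ Measure.map φ (volume.restrict (Ico (0:ℝ) 1)) = A.μ

/-- The Ky Fan distance between two measurable functions on `[0,1)`. -/
def kyFan (f g : ℝ → ℝ) : ℝ :=
  sInf {ε : ℝ | 0 ≤ ε ∧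
    (volume.restrict (Ico (0:ℝ) 1)) {x | ε < |f x - g x|} ≤ ENNReal.ofReal ε}

/-- The pullback of the 1-Lipschitz functions on an mm-space by a parameter. -/
def pullLip (A : MMSpace) (φ : ℝ → A.X) : Set (ℝ → ℝ) :=
  {h | ∃ f : A.X → ℝ, LipschitzWith 1 f ∧ h = f ∘ φ}

/-- The Hausdorff distance between two sets of functions with respect to the Ky Fan metric. -/
def hausdorffKF (A B : Set (ℝ → ℝ)) : ℝ :=
  max (⨆ f ∈ A, ⨅ g ∈ B, kyFan f g) (⨆ g ∈ B, ⨅ f ∈ A, kyFan f g)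

/-- The observable distance between two mm-spaces. -/
def dconc (A B : MMSpace) : ℝ :=
  sInf {r : ℝ | ∃ φ ψ, IsParameter A φ ∧ IsParameter B ψ ∧
    r = hausdorffKF (pullLip A φ) (pullLip B ψ)}

end

noncomputable section

/-- The smooth approximation `F_a(x) = a⁻¹ log(e^{ax} + e^{-ax})` of `|x|`. -/
def Fa (a x : ℝ) : ℝ := a⁻¹ * Real.log (Real.exp (a * x) + Real.exp (-(a * x)))

/-- A (minimizing, constant-speed) geodesic parametrized by `[0,1]`. -/
def IsGeodOn01 {X : Type*} [PseudoMetricSpace X] (γ : ℝ → X) : Prop :=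
  ∀ s ∈ Set.Icc (0:ℝ) 1, ∀ s' ∈ Set.Icc (0:ℝ) 1,
    dist (γ s) (γ s') = |s - s'| * dist (γ 0) (γ 1)

end


section AuxProofs

open MeasureTheory ENNReal Set

lemma bern_ennreal {p : ℝ} (hp : 1 ≤ p) (x : ℝ≥0∞) :
    ENNReal.ofReal p * x + 1 ≤ x ^ p + ENNReal.ofReal p := by
  rcases eq_or_ne x ∞ with rfl | hx
  · rw [ENNReal.top_rpow_of_pos (by linarith)]; simp
  · have ht : (0:ℝ) ≤ x.toReal := ENNReal.toReal_nonneg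
    have key : p * x.toReal + 1 ≤ x.toReal ^ p + p := by
      have := one_add_mul_self_le_rpow_one_add (s := x.toReal - 1) (by linarith) hp
      have h2 : (1 + (x.toReal - 1)) = x.toReal := by ring
      rw [h2] at this; linarith
    calc ENNReal.ofReal p * x + 1
        = ENNReal.ofReal (p * x.toReal + 1) := by
          rw [ENNReal.ofReal_add (by positivity) zero_le_one, ENNReal.ofReal_mul (by linarith),
            ENNReal.ofReal_toReal hx, ENNReal.ofReal_one]
      _ ≤ ENNReal.ofReal (x.toReal ^ p + p) := ENNReal.ofReal_le_ofReal key
      _ = x ^ p + ENNReal.ofReal p := by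
          rw [ENNReal.ofReal_add (by positivity) (by linarith),
            ← ENNReal.ofReal_rpow_of_nonneg ht (by linarith), ENNReal.ofReal_toReal hx]

lemma one_le_lintegral_rpow {α : Type*} [MeasurableSpace α] (μ : Measure α)
    [IsProbabilityMeasure μ] {ρ : α → ℝ≥0∞} (hρ : Measurable ρ)
    (hint : ∫⁻ x, ρ x ∂μ = 1) {p : ℝ} (hp : 1 ≤ p) :
    1 ≤ ∫⁻ x, ρ x ^ p ∂μ := by
  have h := lintegral_mono (μ := μ) (fun x => bern_ennreal hp (ρ x))
  rw [lintegral_add_right (fun a => ENNReal.ofReal p * ρ a) measurable_const,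
    lintegral_add_right (fun a => ρ a ^ p) measurable_const,
    lintegral_const_mul _ hρ, hint] at h
  simp only [lintegral_const, measure_univ, mul_one] at h
  exact (ENNReal.add_le_add_iff_right ENNReal.ofReal_ne_top).mp (by rwa [add_comm 1])

lemma sigma_half_le {κ D θ : ℝ} (hκ : κ < 0) (hD : 0 ≤ D) (hθ : D ≤ θ) :
    sigmaCoeff κ (1/2) θ ≤ ENNReal.ofReal (1 / (2 * Real.cosh (Real.sqrt (-κ) * D / 2))) := by
  set a := Real.sqrt (-κ) with ha
  have ha0 : 0 < a := Real.sqrt_pos.2 (by linarith)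
  have hcoshD : 0 < Real.cosh (a * D / 2) := Real.cosh_pos _
  have homega : omegaKappa κ = ⊤ := by rw [omegaKappa, if_neg (by linarith)]
  rw [sigmaCoeff, homega, if_pos ENNReal.ofReal_lt_top]
  apply ENNReal.ofReal_le_ofReal
  rcases eq_or_lt_of_le (hD.trans hθ) with h0 | h0
  · rw [← h0]
    have hD0 : D = 0 := le_antisymm (h0 ▸ hθ) hD
    simp [sKappa, hD0, Real.cosh_zero]
  · have hθ0 : θ ≠ 0 := ne_of_gt h0
    have hhalf : (1/2 : ℝ) * θ ≠ 0 := by positivity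
    rw [sKappa, if_neg hhalf, if_neg (by linarith), if_pos hκ,
      sKappa, if_neg hθ0, if_neg (by linarith), if_pos hκ]
    have hsθ : 0 < Real.sinh (a * θ) := Real.sinh_pos_iff.2 (by positivity)
    have hsh : 0 < Real.sinh (a * (1/2 * θ)) := Real.sinh_pos_iff.2 (by positivity)
    have hdouble : Real.sinh (a * θ)
        = 2 * Real.sinh (a * (1/2 * θ)) * Real.cosh (a * (1/2 * θ)) := by
      rw [← Real.sinh_two_mul]; ring_nf
    have hch : 0 < Real.cosh (a * (1/2 * θ)) := Real.cosh_pos _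
    have heq : 1/2 * (Real.sinh (a * (1/2 * θ)) / (a * (1/2 * θ))) / (Real.sinh (a * θ) / (a * θ))
        = 1 / (2 * Real.cosh (a * (1/2 * θ))) := by
      rw [hdouble]; field_simp
    rw [heq]
    have hmono : Real.cosh (a * D / 2) ≤ Real.cosh (a * (1/2 * θ)) := by
      rw [Real.cosh_le_cosh]
      rw [abs_of_nonneg (by positivity), abs_of_nonneg (by positivity)]
      nlinarith
    apply div_le_div_of_nonneg_left (by norm_num) (by positivity) (by linarith)

lemma le_acosh_of_cosh_le {u y : ℝ} (hu : 0 ≤ u) (h : Real.cosh u ≤ y) : u ≤ acosh y := by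
  have h1 : (1:ℝ) ≤ Real.cosh u := Real.one_le_cosh u
  have hsinh : Real.sinh u = Real.sqrt (Real.cosh u ^ 2 - 1) := by
    rw [← Real.sinh_sq]
    exact (Real.sqrt_sq (Real.sinh_nonneg_iff.2 hu)).symm
  have hkey : Real.exp u ≤ y + Real.sqrt (y ^ 2 - 1) := by
    rw [← Real.cosh_add_sinh, hsinh]
    have hs : Real.sqrt (Real.cosh u ^ 2 - 1) ≤ Real.sqrt (y ^ 2 - 1) :=
      Real.sqrt_le_sqrt (by nlinarith)
    linarith
  calc u = Real.log (Real.exp u) := (Real.log_exp u).symm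
    _ ≤ acosh y := Real.log_le_log (Real.exp_pos u) hkey

lemma cd_core {X : Type*} [MetricSpace X] [MeasurableSpace X] [BorelSpace X]
    (μX : Measure X) [IsProbabilityMeasure μX] (K N : ℝ) (hK : 0 < K) (hN : N < 0)
    (hCD : IsCDStarSpace K N μX)
    (k₀ k₁ : ℝ) (h0 : 0 < k₀) (h1 : 0 < k₁)
    (B₀ B₁ : Set X) (hB₀ : MeasurableSet B₀) (hB₁ : MeasurableSet B₁)
    (x₀ : X) (R : ℝ) (hb₀ : B₀ ⊆ Metric.closedBall x₀ R) (hb₁ : B₁ ⊆ Metric.closedBall x₀ R)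
    (hm0 : ENNReal.ofReal k₀ ≤ μX B₀) (hm1 : ENNReal.ofReal k₁ ≤ μX B₁)
    (D : ℝ) (hD : 0 ≤ D) (hsep : ∀ x ∈ B₀, ∀ y ∈ B₁, D ≤ dist x y) :
    2 * Real.cosh (Real.sqrt (-(K/N)) * D / 2) ≤ k₀ ^ (1/N) + k₁ ^ (1/N) := by
  have hκN : K / N < 0 := div_neg_of_pos_of_neg hK hN
  have hNinv : 1 / N < 0 := div_neg_of_pos_of_neg one_pos hN
  set a := Real.sqrt (-(K/N)) with ha
  have hcosh : 0 < Real.cosh (a * D / 2) := Real.cosh_pos _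
  set m₀ := μX B₀ with hm₀def
  set m₁ := μX B₁ with hm₁def
  have hm₀0 : m₀ ≠ 0 := by
    intro h
    rw [h, nonpos_iff_eq_zero, ENNReal.ofReal_eq_zero] at hm0
    linarith
  have hm₁0 : m₁ ≠ 0 := by
    intro h
    rw [h, nonpos_iff_eq_zero, ENNReal.ofReal_eq_zero] at hm1
    linarith
  have hm₀t : m₀ ≠ ∞ := measure_ne_top _ _
  have hm₁t : m₁ ≠ ∞ := measure_ne_top _ _
  set ν₀ : Measure X := m₀⁻¹ • μX.restrict B₀ with hν₀def
  set ν₁ : Measure X := m₁⁻¹ • μX.restrict B₁ with hν₁def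
  have hP₀ : IsProbabilityMeasure ν₀ :=
    ⟨by simp [hν₀def, Measure.smul_apply, Measure.restrict_apply_univ, smul_eq_mul,
        ENNReal.inv_mul_cancel hm₀0 hm₀t]; exact ENNReal.inv_mul_cancel hm₀0 hm₀t⟩
  have hP₁ : IsProbabilityMeasure ν₁ :=
    ⟨by simp [hν₁def, Measure.smul_apply, Measure.restrict_apply_univ, smul_eq_mul,
        ENNReal.inv_mul_cancel hm₁0 hm₁t]; exact ENNReal.inv_mul_cancel hm₁0 hm₁t⟩
  haveI := hP₀; haveI := hP₁
  have hac₀ : ν₀ ≪ μX := by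
    refine Measure.AbsolutelyContinuous.mk fun s hs h0s => ?_
    have hr : μX.restrict B₀ s = 0 :=
      le_antisymm (h0s ▸ Measure.restrict_apply_le B₀ s) zero_le
    simp [hν₀def, Measure.smul_apply, hr]
  have hac₁ : ν₁ ≪ μX := by
    refine Measure.AbsolutelyContinuous.mk fun s hs h0s => ?_
    have hr : μX.restrict B₁ s = 0 :=
      le_antisymm (h0s ▸ Measure.restrict_apply_le B₁ s) zero_le
    simp [hν₁def, Measure.smul_apply, hr]
  have hd₀ : ν₀.rnDeriv μX =ᵐ[μX] fun x => m₀⁻¹ * B₀.indicator 1 x := by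
    have h1 := Measure.rnDeriv_smul_left_of_ne_top (μX.restrict B₀) μX
      (r := m₀⁻¹) (by simp [hm₀0])
    have h2 := Measure.rnDeriv_restrict_self μX hB₀
    filter_upwards [h1, h2] with x hx1 hx2
    rw [hx1]; simp [hx2]
  have hd₁ : ν₁.rnDeriv μX =ᵐ[μX] fun x => m₁⁻¹ * B₁.indicator 1 x := by
    have h1 := Measure.rnDeriv_smul_left_of_ne_top (μX.restrict B₁) μX
      (r := m₁⁻¹) (by simp [hm₁0])
    have h2 := Measure.rnDeriv_restrict_self μX hB₁
    filter_upwards [h1, h2] with x hx1 hx2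
    rw [hx1]; simp [hx2]
  have hcompl₀ : ν₀ B₀ᶜ = 0 := by
    simp [hν₀def, Measure.smul_apply, Measure.restrict_apply hB₀.compl]
  have hcompl₁ : ν₁ B₁ᶜ = 0 := by
    simp [hν₁def, Measure.smul_apply, Measure.restrict_apply hB₁.compl]
  have hmem₀ : ∀ᵐ x ∂ν₀, x ∈ B₀ := by
    have hset : {x | ¬ x ∈ B₀} = B₀ᶜ := rfl
    rw [ae_iff, hset]; exact hcompl₀
  have hmem₁ : ∀ᵐ x ∂ν₁, x ∈ B₁ := by
    have hset : {x | ¬ x ∈ B₁} = B₁ᶜ := rfl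
    rw [ae_iff, hset]; exact hcompl₁
  have hfs₀ : HasFiniteSecondMoment ν₀ := by
    refine ⟨x₀, ?_⟩
    calc ∫⁻ x, ENNReal.ofReal (dist x x₀) ^ 2 ∂ν₀
        ≤ ∫⁻ _x, (ENNReal.ofReal R) ^ 2 ∂ν₀ := lintegral_mono_ae (by
          filter_upwards [hmem₀] with x hx
          exact pow_le_pow_left' (ENNReal.ofReal_le_ofReal (Metric.mem_closedBall.mp (hb₀ hx))) 2)
      _ = (ENNReal.ofReal R) ^ 2 := by rw [lintegral_const, measure_univ, mul_one]
      _ < ∞ := ENNReal.pow_lt_top ENNReal.ofReal_lt_top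
  have hfs₁ : HasFiniteSecondMoment ν₁ := by
    refine ⟨x₀, ?_⟩
    calc ∫⁻ x, ENNReal.ofReal (dist x x₀) ^ 2 ∂ν₁
        ≤ ∫⁻ _x, (ENNReal.ofReal R) ^ 2 ∂ν₁ := lintegral_mono_ae (by
          filter_upwards [hmem₁] with x hx
          exact pow_le_pow_left' (ENNReal.ofReal_le_ofReal (Metric.mem_closedBall.mp (hb₁ hx))) 2)
      _ = (ENNReal.ofReal R) ^ 2 := by rw [lintegral_const, measure_univ, mul_one]
      _ < ∞ := ENNReal.pow_lt_top ENNReal.ofReal_lt_top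
  have hexp1 : (1:ℝ) ≤ 1 - 1/N := by linarith
  have hent₀ : renyiEntropy N μX ν₀ < ∞ := by
    rw [renyiEntropy, if_pos hac₀]
    calc ∫⁻ x, (ν₀.rnDeriv μX x) ^ (1 - 1/N) ∂μX
        ≤ ∫⁻ _x, (m₀⁻¹) ^ (1 - 1/N) ∂μX := lintegral_mono_ae (by
          filter_upwards [hd₀] with x hx
          rw [hx]
          refine ENNReal.rpow_le_rpow ?_ (by linarith)
          by_cases hxB : x ∈ B₀ <;> simp [hxB])
      _ = (m₀⁻¹) ^ (1 - 1/N) := by rw [lintegral_const, measure_univ, mul_one]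
      _ < ∞ := ENNReal.rpow_lt_top_of_nonneg (by linarith) (by simp [hm₀0])
  have hent₁ : renyiEntropy N μX ν₁ < ∞ := by
    rw [renyiEntropy, if_pos hac₁]
    calc ∫⁻ x, (ν₁.rnDeriv μX x) ^ (1 - 1/N) ∂μX
        ≤ ∫⁻ _x, (m₁⁻¹) ^ (1 - 1/N) ∂μX := lintegral_mono_ae (by
          filter_upwards [hd₁] with x hx
          rw [hx]
          refine ENNReal.rpow_le_rpow ?_ (by linarith)
          by_cases hxB : x ∈ B₁ <;> simp [hxB])
      _ = (m₁⁻¹) ^ (1 - 1/N) := by rw [lintegral_const, measure_univ, mul_one]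
      _ < ∞ := ENNReal.rpow_lt_top_of_nonneg (by linarith) (by simp [hm₁0])
  obtain ⟨νt, π, ht0, ht1, hWgeo, hopt, hent⟩ :=
    hCD ν₀ ν₁ hP₀ hP₁ hac₀ hac₁ hfs₀ hfs₁ hent₀ hent₁
  obtain ⟨hcfst, hcsnd⟩ := hopt.1
  have hπuniv : π Set.univ = 1 := by
    have h := congrArg (fun μ : Measure X => μ Set.univ) hcfst
    simpa [Measure.map_apply measurable_fst MeasurableSet.univ] using h
  have hW2fin : W2 ν₀ ν₁ < ∞ := by
    have hcoup : IsCoupling (ν₀.prod ν₁) ν₀ ν₁ := by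
      constructor
      · rw [Measure.map_fst_prod]; simp
      · rw [Measure.map_snd_prod]; simp
    have haeprod : ∀ᵐ p ∂(ν₀.prod ν₁), p.1 ∈ B₀ ∧ p.2 ∈ B₁ := by
      have h1 : (ν₀.prod ν₁) ((B₀ ×ˢ B₁)ᶜ) = 0 := by
        have hsub : (B₀ ×ˢ B₁)ᶜ ⊆ (B₀ᶜ ×ˢ univ) ∪ (univ ×ˢ B₁ᶜ) := by
          intro p hp
          simp only [Set.mem_compl_iff, Set.mem_prod, Set.mem_union, Set.mem_univ,
            and_true, true_and] at *
          tauto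
        refine measure_mono_null hsub (measure_union_null ?_ ?_) <;>
          rw [Measure.prod_prod] <;> simp [hcompl₀, hcompl₁]
      have hset : {p : X × X | ¬ (p.1 ∈ B₀ ∧ p.2 ∈ B₁)} = (B₀ ×ˢ B₁)ᶜ := by
        ext p; simp [Set.mem_prod]
      rw [ae_iff, hset]; exact h1
    refine lt_of_le_of_lt (iInf₂_le (ν₀.prod ν₁) hcoup) ?_
    rw [cost2]
    refine ENNReal.rpow_lt_top_of_nonneg (by norm_num) (ne_of_lt ?_)
    calc ∫⁻ p, ENNReal.ofReal (dist p.1 p.2) ^ 2 ∂(ν₀.prod ν₁)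
        ≤ ∫⁻ _p, (ENNReal.ofReal (R + R)) ^ 2 ∂(ν₀.prod ν₁) := lintegral_mono_ae (by
          filter_upwards [haeprod] with p hp
          have hc₀ : dist p.1 x₀ ≤ R := Metric.mem_closedBall.mp (hb₀ hp.1)
          have hc₁ : dist p.2 x₀ ≤ R := Metric.mem_closedBall.mp (hb₁ hp.2)
          have hd : dist p.1 p.2 ≤ R + R := by
            calc dist p.1 p.2 ≤ dist p.1 x₀ + dist p.2 x₀ := dist_triangle_right _ _ _
              _ ≤ R + R := by linarith
          exact pow_le_pow_left' (ENNReal.ofReal_le_ofReal hd) 2)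
      _ = (ENNReal.ofReal (R + R)) ^ 2 := by rw [lintegral_const, measure_univ, mul_one]
      _ < ∞ := ENNReal.pow_lt_top ENNReal.ofReal_lt_top
  have hWhalf : W2 ν₀ (νt (1/2)) < ∞ := by
    have h := hWgeo 0 (by norm_num [Set.mem_Icc]) (1/2) (by norm_num [Set.mem_Icc])
    rw [ht0] at h
    rw [h]
    exact ENNReal.mul_lt_top ENNReal.ofReal_lt_top hW2fin
  obtain ⟨π', hπ'⟩ : ∃ π', IsCoupling π' ν₀ (νt (1/2)) := by
    by_contra hno
    push_neg at hno
    have : W2 ν₀ (νt (1/2)) = ∞ := by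
      rw [W2]
      exact iInf_eq_top.2 fun π'' => iInf_neg (hno π'')
    rw [this] at hWhalf
    exact absurd hWhalf (lt_irrefl _)
  have hmass : νt (1/2) Set.univ = 1 := by
    have hfst := congrArg (fun μ : Measure X => μ Set.univ) hπ'.1
    have hsnd := congrArg (fun μ : Measure X => μ Set.univ) hπ'.2
    simp only [Measure.map_apply measurable_fst MeasurableSet.univ,
      Measure.map_apply measurable_snd MeasurableSet.univ, Set.preimage_univ,
      measure_univ] at hfst hsnd
    rw [← hsnd, hfst]
  haveI hPhalf : IsProbabilityMeasure (νt (1/2)) := ⟨hmass⟩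
  have hineq := hent (1/2) (by norm_num [Set.mem_Icc]) N (Set.mem_Ico.2 ⟨le_rfl, hN⟩) hent₀ hent₁
  have hlow : (1 : ℝ≥0∞) ≤ renyiEntropy N μX (νt (1/2)) := by
    rw [renyiEntropy]
    split_ifs with hac
    · exact one_le_lintegral_rpow μX (Measure.measurable_rnDeriv _ _)
        (by rw [Measure.lintegral_rnDeriv hac, hmass]) hexp1
    · exact le_top
  have hπfst : ∀ᵐ p ∂π, p.1 ∈ B₀ := by
    refine ae_of_ae_map measurable_fst.aemeasurable ?_
    rw [hcfst]; exact hmem₀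
  have hπsnd : ∀ᵐ p ∂π, p.2 ∈ B₁ := by
    refine ae_of_ae_map measurable_snd.aemeasurable ?_
    rw [hcsnd]; exact hmem₁
  have hd₀π : ∀ᵐ p ∂π, ν₀.rnDeriv μX p.1 = m₀⁻¹ * B₀.indicator 1 p.1 := by
    have h' : ∀ᵐ x ∂(π.map Prod.fst), ν₀.rnDeriv μX x = m₀⁻¹ * B₀.indicator 1 x := by
      rw [hcfst]; exact hac₀.ae_le hd₀
    exact ae_of_ae_map measurable_fst.aemeasurable h' 
  have hd₁π : ∀ᵐ p ∂π, ν₁.rnDeriv μX p.2 = m₁⁻¹ * B₁.indicator 1 p.2 := by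
    have h' : ∀ᵐ x ∂(π.map Prod.snd), ν₁.rnDeriv μX x = m₁⁻¹ * B₁.indicator 1 x := by
      rw [hcsnd]; exact hac₁.ae_le hd₁
    exact ae_of_ae_map measurable_snd.aemeasurable h' 
  have hconst : ∀ k : ℝ, 0 < k →
      ∀ m : ℝ≥0∞, ENNReal.ofReal k ≤ m →
      (m⁻¹) ^ (-(1/N)) ≤ ENNReal.ofReal (k ^ (1/N)) := by
    intro k hk m hm
    calc (m⁻¹) ^ (-(1/N)) ≤ ((ENNReal.ofReal k)⁻¹) ^ (-(1/N)) := by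
          exact ENNReal.rpow_le_rpow (ENNReal.inv_le_inv' hm) (by linarith)
      _ = ENNReal.ofReal (k ^ (1/N)) := by
          rw [ENNReal.inv_rpow, ← ENNReal.rpow_neg, neg_neg, ENNReal.ofReal_rpow_of_pos hk]
  have hbound : ∀ (i : Fin 2),
      True := fun _ => trivial
  have hT₀ : (∫⁻ p, sigmaCoeff (K/N) (1 - 1/2) (dist p.1 p.2)
        * (ν₀.rnDeriv μX p.1) ^ (-(1/N)) ∂π)
      ≤ ENNReal.ofReal (1/(2*Real.cosh (a*D/2))) * ENNReal.ofReal (k₀ ^ (1/N)) := by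
    calc (∫⁻ p, sigmaCoeff (K/N) (1 - 1/2) (dist p.1 p.2)
          * (ν₀.rnDeriv μX p.1) ^ (-(1/N)) ∂π)
        ≤ ∫⁻ _p, ENNReal.ofReal (1/(2*Real.cosh (a*D/2))) * ENNReal.ofReal (k₀ ^ (1/N)) ∂π :=
          lintegral_mono_ae (by
            filter_upwards [hπfst, hπsnd, hd₀π] with p hp1 hp2 hpd
            have hdist : D ≤ dist p.1 p.2 := hsep _ hp1 _ hp2
            have h12 : (1 - 1/2 : ℝ) = 1/2 := by norm_num
            rw [h12]
            refine mul_le_mul' (sigma_half_le hκN hD hdist) ?_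
            rw [hpd, Set.indicator_of_mem hp1, Pi.one_apply, mul_one]
            exact hconst k₀ h0 m₀ hm0)
      _ = ENNReal.ofReal (1/(2*Real.cosh (a*D/2))) * ENNReal.ofReal (k₀ ^ (1/N)) := by
          rw [lintegral_const, hπuniv, mul_one]
  have hT₁ : (∫⁻ p, sigmaCoeff (K/N) (1/2) (dist p.1 p.2)
        * (ν₁.rnDeriv μX p.2) ^ (-(1/N)) ∂π)
      ≤ ENNReal.ofReal (1/(2*Real.cosh (a*D/2))) * ENNReal.ofReal (k₁ ^ (1/N)) := by
    calc (∫⁻ p, sigmaCoeff (K/N) (1/2) (dist p.1 p.2)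
          * (ν₁.rnDeriv μX p.2) ^ (-(1/N)) ∂π)
        ≤ ∫⁻ _p, ENNReal.ofReal (1/(2*Real.cosh (a*D/2))) * ENNReal.ofReal (k₁ ^ (1/N)) ∂π :=
          lintegral_mono_ae (by
            filter_upwards [hπfst, hπsnd, hd₁π] with p hp1 hp2 hpd
            have hdist : D ≤ dist p.1 p.2 := hsep _ hp1 _ hp2
            refine mul_le_mul' (sigma_half_le hκN hD hdist) ?_
            rw [hpd, Set.indicator_of_mem hp2, Pi.one_apply, mul_one]
            exact hconst k₁ h1 m₁ hm1)
      _ = ENNReal.ofReal (1/(2*Real.cosh (a*D/2))) * ENNReal.ofReal (k₁ ^ (1/N)) := by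
          rw [lintegral_const, hπuniv, mul_one]
  have hfinal : (1 : ℝ≥0∞) ≤ ENNReal.ofReal
      ((k₀ ^ (1/N) + k₁ ^ (1/N)) * (1/(2*Real.cosh (a*D/2)))) := by
    refine le_trans hlow (le_trans hineq ?_)
    refine le_trans (add_le_add hT₀ hT₁) (le_of_eq ?_)
    rw [← ENNReal.ofReal_mul (by positivity), ← ENNReal.ofReal_mul (by positivity),
      ← ENNReal.ofReal_add (by positivity) (by positivity)]
    congr 1
    ring
  rw [ENNReal.one_le_ofReal, mul_one_div, le_div_iff₀ (by positivity)] at hfinal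
  linarith

end AuxProofs

open MeasureTheory Set in
/-- Separation distance bound for `CD*(K,N)` spaces with `K > 0`, `N < 0`. -/
theorem sep_bound_of_CDstar {X : Type*} [MetricSpace X] [CompleteSpace X]
    [TopologicalSpace.SeparableSpace X] [MeasurableSpace X] [BorelSpace X]
    (μX : Measure X) [IsProbabilityMeasure μX]
    (K N : ℝ) (hK : 0 < K) (hN : N < 0) (hCD : IsCDStarSpace K N μX)
    (κ₀ κ₁ : ℝ) (h0 : 0 < κ₀) (h1 : 0 < κ₁) (hsum : κ₀ + κ₁ < 1)
    (A₀ A₁ : Set X) (hA₀ : MeasurableSet A₀) (hA₁ : MeasurableSet A₁)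
    (hm0 : ENNReal.ofReal κ₀ ≤ μX A₀) (hm1 : ENNReal.ofReal κ₁ ≤ μX A₁) :
    (⨅ x ∈ A₀, ⨅ y ∈ A₁, edist x y) ≤
      ENNReal.ofReal (2 * Real.sqrt (-N / K) *
        acosh ((κ₀ ^ (1 / N) + κ₁ ^ (1 / N)) / 2)) := by
  classical
  have hA₀ne : A₀.Nonempty := by
    rcases Set.eq_empty_or_nonempty A₀ with he | h
    · exfalso
      rw [he, measure_empty, nonpos_iff_eq_zero, ENNReal.ofReal_eq_zero] at hm0
      linarith
    · exact h
  have hA₁ne : A₁.Nonempty := by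
    rcases Set.eq_empty_or_nonempty A₁ with he | h
    · exfalso
      rw [he, measure_empty, nonpos_iff_eq_zero, ENNReal.ofReal_eq_zero] at hm1
      linarith
    · exact h
  obtain ⟨x₀, hx₀⟩ := hA₀ne
  obtain ⟨y₀, hy₀⟩ := hA₁ne
  set L := (⨅ x ∈ A₀, ⨅ y ∈ A₁, edist x y) with hLdef
  have hLle : L ≤ edist x₀ y₀ := le_trans (iInf₂_le x₀ hx₀) (iInf₂_le y₀ hy₀)
  have hLt : L ≠ ∞ := (lt_of_le_of_lt hLle (edist_lt_top x₀ y₀)).ne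
  have hκ₀1 : κ₀ < 1 := by linarith
  have hκ₁1 : κ₁ < 1 := by linarith
  have h1N : 1 / N ≤ 0 := le_of_lt (div_neg_of_pos_of_neg one_pos hN)
  have hr₀ : 1 ≤ κ₀ ^ (1 / N) :=
    Real.one_le_rpow_of_pos_of_le_one_of_nonpos h0 hκ₀1.le h1N
  have hr₁ : 1 ≤ κ₁ ^ (1 / N) :=
    Real.one_le_rpow_of_pos_of_le_one_of_nonpos h1 hκ₁1.le h1N
  set v := (κ₀ ^ (1 / N) + κ₁ ^ (1 / N)) / 2 with hvdef
  have hv1 : 1 ≤ v := by rw [hvdef]; linarith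
  have hacosh0 : 0 ≤ acosh v :=
    Real.log_nonneg (by nlinarith [Real.sqrt_nonneg (v ^ 2 - 1)])
  have hT0 : 0 ≤ 2 * Real.sqrt (-N / K) * acosh v :=
    mul_nonneg (mul_nonneg (by norm_num) (Real.sqrt_nonneg _)) hacosh0
  by_contra hcon
  push_neg at hcon
  have hDT : 2 * Real.sqrt (-N / K) * acosh v < L.toReal :=
    (ENNReal.ofReal_lt_iff_lt_toReal hT0 hLt).mp hcon
  set D := L.toReal with hDdef
  have hD0 : 0 ≤ D := ENNReal.toReal_nonneg
  have hsepD : ∀ x ∈ A₀, ∀ y ∈ A₁, D ≤ dist x y := by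
    intro x hx y hy
    have h : L ≤ edist x y := le_trans (iInf₂_le x hx) (iInf₂_le y hy)
    rw [dist_edist]
    exact ENNReal.toReal_mono (edist_ne_top x y) h
  set m := min κ₀ κ₁ with hmdef
  have hm : 0 < m := lt_min h0 h1
  set ε : ℕ → ℝ := fun n => m / (n + 2) with hεdef
  have hεpos : ∀ n, 0 < ε n := fun n => div_pos hm (by positivity)
  have hεlt : ∀ n, ε n < m := by
    intro n
    rw [hεdef]
    apply div_lt_self hm
    have : (0:ℝ) ≤ (n:ℝ) := Nat.cast_nonneg n
    linarith
  have hεa : ∀ n, ε n < κ₀ ∧ ε n < κ₁ := fun n =>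
    ⟨lt_of_lt_of_le (hεlt n) (min_le_left _ _), lt_of_lt_of_le (hεlt n) (min_le_right _ _)⟩
  set a := Real.sqrt (-(K / N)) with hadef
  have hapos : 0 < a := Real.sqrt_pos.2 (neg_pos.2 (div_neg_of_pos_of_neg hK hN))
  have hmain : ∀ n : ℕ,
      D ≤ 2 * a⁻¹ * acosh (((κ₀ - ε n) ^ (1 / N) + (κ₁ - ε n) ^ (1 / N)) / 2) := by
    intro n
    have hcover : ∀ A : Set X, A = ⋃ k : ℕ, A ∩ Metric.closedBall x₀ k := by
      intro A
      ext x
      simp only [Set.mem_iUnion, Set.mem_inter_iff, Metric.mem_closedBall]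
      constructor
      · intro hx
        obtain ⟨k, hk⟩ := exists_nat_ge (dist x x₀)
        exact ⟨k, hx, hk⟩
      · rintro ⟨k, hk, _⟩
        exact hk
    have htend : ∀ A : Set X, Filter.Tendsto (fun k : ℕ => μX (A ∩ Metric.closedBall x₀ k))
        Filter.atTop (nhds (μX A)) := by
      intro A
      have hmono : Monotone (fun k : ℕ => A ∩ Metric.closedBall x₀ k) := by
        intro i j hij
        apply Set.inter_subset_inter_right
        exact Metric.closedBall_subset_closedBall (by exact_mod_cast hij)
      have h := tendsto_measure_iUnion_atTop (μ := μX) hmono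
      rwa [← hcover A] at h
    have hget : ∀ (A : Set X) (κ : ℝ), 0 < κ → ε n < κ → ENNReal.ofReal κ ≤ μX A →
        ∀ᶠ k : ℕ in Filter.atTop,
          ENNReal.ofReal (κ - ε n) ≤ μX (A ∩ Metric.closedBall x₀ k) := by
      intro A κ hκ hεκ hμ
      have hlt : ENNReal.ofReal (κ - ε n) < μX A :=
        lt_of_lt_of_le ((ENNReal.ofReal_lt_ofReal_iff hκ).2 (by linarith [hεpos n])) hμ
      exact (htend A).eventually (eventually_ge_nhds hlt)
    obtain ⟨k, hk₀, hk₁⟩ :=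
      ((hget A₀ κ₀ h0 (hεa n).1 hm0).and (hget A₁ κ₁ h1 (hεa n).2 hm1)).exists
    have hcore := cd_core μX K N hK hN hCD (κ₀ - ε n) (κ₁ - ε n)
      (by linarith [(hεa n).1]) (by linarith [(hεa n).2])
      (A₀ ∩ Metric.closedBall x₀ k) (A₁ ∩ Metric.closedBall x₀ k)
      (hA₀.inter measurableSet_closedBall)
      (hA₁.inter measurableSet_closedBall)
      x₀ k Set.inter_subset_right Set.inter_subset_right hk₀ hk₁ D hD0
      (fun x hx y hy => hsepD x hx.1 y hy.1)
    have h2 : a * D / 2 ≤ acosh (((κ₀ - ε n) ^ (1 / N) + (κ₁ - ε n) ^ (1 / N)) / 2) :=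
      le_acosh_of_cosh_le (by positivity) (by rw [hadef]; linarith)
    calc D = 2 * a⁻¹ * (a * D / 2) := by field_simp
      _ ≤ 2 * a⁻¹ * acosh (((κ₀ - ε n) ^ (1 / N) + (κ₁ - ε n) ^ (1 / N)) / 2) := by
          apply mul_le_mul_of_nonneg_left h2 (by positivity)
  have hεtend : Filter.Tendsto ε Filter.atTop (nhds 0) := by
    have h1 := tendsto_const_div_atTop_nhds_zero_nat m
    have h2 : Filter.Tendsto (fun n : ℕ => n + 2) Filter.atTop Filter.atTop :=
      Filter.tendsto_add_atTop_nat 2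
    have h3 := h1.comp h2
    have heq : ε = (fun n : ℕ => m / (n : ℝ)) ∘ (fun n => n + 2) := by
      funext n
      simp only [Function.comp_apply, hεdef]
      norm_cast
    rw [heq]
    exact h3
  have hc0 : ContinuousAt (fun e : ℝ => (κ₀ - e) ^ (1 / N)) 0 := by
    have hbase : ContinuousAt (fun e : ℝ => κ₀ - e) 0 :=
      (continuous_const.sub continuous_id).continuousAt
    have hpt : (fun e : ℝ => κ₀ - e) 0 = κ₀ := by norm_num
    have hr := Real.continuousAt_rpow_const ((fun e : ℝ => κ₀ - e) 0) (1 / N)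
      (Or.inl (by rw [hpt]; exact ne_of_gt h0))
    exact hr.comp hbase
  have hc1 : ContinuousAt (fun e : ℝ => (κ₁ - e) ^ (1 / N)) 0 := by
    have hbase : ContinuousAt (fun e : ℝ => κ₁ - e) 0 :=
      (continuous_const.sub continuous_id).continuousAt
    have hpt : (fun e : ℝ => κ₁ - e) 0 = κ₁ := by norm_num
    have hr := Real.continuousAt_rpow_const ((fun e : ℝ => κ₁ - e) 0) (1 / N)
      (Or.inl (by rw [hpt]; exact ne_of_gt h1))
    exact hr.comp hbase
  have hinner : ContinuousAt
      (fun e : ℝ => ((κ₀ - e) ^ (1 / N) + (κ₁ - e) ^ (1 / N)) / 2) 0 :=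
    (hc0.add hc1).div_const 2
  have hva : (fun e : ℝ => ((κ₀ - e) ^ (1 / N) + (κ₁ - e) ^ (1 / N)) / 2) 0 = v := by
    rw [hvdef]; norm_num
  have hacoshc : ContinuousAt acosh
      ((fun e : ℝ => ((κ₀ - e) ^ (1 / N) + (κ₁ - e) ^ (1 / N)) / 2) 0) := by
    rw [hva]
    show ContinuousAt (fun x : ℝ => Real.log (x + Real.sqrt (x ^ 2 - 1))) v
    have hpos : v + Real.sqrt (v ^ 2 - 1) ≠ 0 := by
      have := Real.sqrt_nonneg (v ^ 2 - 1)
      nlinarith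
    have hf : ContinuousAt (fun x : ℝ => x + Real.sqrt (x ^ 2 - 1)) v :=
      (continuous_id.add (Real.continuous_sqrt.comp (by continuity))).continuousAt
    exact hf.log hpos
  have hcomp := ContinuousAt.comp (g := acosh)
    (f := fun e : ℝ => ((κ₀ - e) ^ (1 / N) + (κ₁ - e) ^ (1 / N)) / 2) (x := 0) hacoshc hinner
  have hcont : ContinuousAt
      (fun e : ℝ => 2 * a⁻¹ * acosh (((κ₀ - e) ^ (1 / N) + (κ₁ - e) ^ (1 / N)) / 2)) 0 :=
    continuousAt_const.mul hcomp
  have hflim : Filter.Tendsto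
      (fun n : ℕ => 2 * a⁻¹ * acosh (((κ₀ - ε n) ^ (1 / N) + (κ₁ - ε n) ^ (1 / N)) / 2))
      Filter.atTop (nhds (2 * a⁻¹ * acosh v)) := by
    have h := hcont.tendsto.comp hεtend
    simp only [Function.comp_def, sub_zero] at h
    rw [hvdef]
    exact h
  have hDv : D ≤ 2 * a⁻¹ * acosh v := ge_of_tendsto' hflim hmain
  have hsqrt : Real.sqrt (-N / K) = a⁻¹ := by
    rw [hadef, ← Real.sqrt_inv]
    congr 1
    rw [← neg_inv, inv_div]
    ring
  rw [hsqrt] at hDT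
  linarith
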